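/- For all integers k ≥ 2 and n ≥ k+1, the following identity of polynomials in ℤ[q] holds: ∑ q^{4 + 3i₀ + 2i₁ + i₂ + j₁ + 2j₂ + 4j₃ + i₀j₁ + i₀j₂ + i₀j₃ + i₁j₂ + i₁j₃ + i₂j₃} · [i₀+j₀ choose i₀]_q · [i₁+j₁ choose i₁]_q · [i₂+j₂ choose i₂]_q · [i₃+j₃ choose i₃]_q = q⁴·[k+1 choose 3]_q·[n+1 choose k+2]_q − q⁷·[k+2 choose 4]_q·[n choose k+2]_q + q⁸·[k+1 choose 4]_q·[n choose k+2]_q, where the sum ranges over all tuples of nonnegative integers (i₀,i₁,i₂,i₃,j₀,j₁,j₂,j₃) with i₀+i₁+i₂+i₃ = k−2 and j₀+j₁+j₂+j₃ = n−k−1. -/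

import Mathlib

open Polynomial Finset

namespace DegTwoAux

noncomputable section

/-! ### A concrete Gaussian binomial, defined by the q-Pascal recurrence -/

def qb : ℕ → ℕ → Polynomial ℤ
  | _, 0 => 1
  | 0, _+1 => 0
  | m+1, j+1 => qb m j + X^(j+1) * qb m (j+1)

lemma qb_zero (m : ℕ) : qb m 0 = 1 := by cases m <;> rfl

lemma qb_of_lt : ∀ {m j : ℕ}, m < j → qb m j = 0
  | 0, _+1, _ => rfl
  | m+1, j+1, h => by
      rw [qb, qb_of_lt (show m < j by omega), qb_of_lt (show m < j + 1 by omega)]; ring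

lemma qb_self : ∀ m, qb m m = 1
  | 0 => rfl
  | m+1 => by rw [qb, qb_self m, qb_of_lt (show m < m + 1 by omega)]; ring

lemma prod_Icc_one (F : ℕ → Polynomial ℤ) (j : ℕ) :
    ∏ i ∈ Icc 1 j, F i = ∏ i ∈ range j, F (i+1) := by
  induction j with
  | zero => simp
  | succ j ih =>
      rw [Finset.prod_Icc_succ_top (by omega), ih, Finset.prod_range_succ]

def D (j : ℕ) : Polynomial ℤ := ∏ i ∈ range j, (1 - X^(i+1))

lemma D_ne_zero (j : ℕ) : D j ≠ 0 := by
  refine Finset.prod_ne_zero_iff.2 fun i _ => fun h => ?_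
  have h2 := congrArg (fun p => Polynomial.coeff p (i+1)) h
  simp [Polynomial.coeff_one] at h2

lemma qb_spec : ∀ m j : ℕ, j ≤ m →
    qb m j * D j = ∏ i ∈ range j, (1 - X^(m - j + 1 + i))
  | m, 0, _ => by simp [qb_zero, D]
  | 0, j+1, h => by omega
  | m+1, j+1, h => by
      have hD : D (j+1) = D j * (1 - X^(j+1)) := Finset.prod_range_succ _ _
      rcases Nat.lt_or_ge m (j+1) with h2 | h2
      · have hjm : m = j := by omega
        subst hjm
        rw [qb, qb_self m, qb_of_lt (show m < m + 1 by omega)]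
        have he : ∀ i, m + 1 - (m+1) + 1 + i = i + 1 := fun i => by omega
        simp only [he]
        simp [D]
      · have hsj := qb_spec m j (by omega)
        have hsj1 := qb_spec m (j+1) h2
        have e1 : ∏ i ∈ range (j+1), (1 - (X:Polynomial ℤ) ^ (m - (j+1) + 1 + i))
            = (1 - (X:Polynomial ℤ)^(m-j)) * ∏ i ∈ range j, (1 - X^(m - j + 1 + i)) := by
          rw [Finset.prod_range_succ']
          have h3 : ∀ i, m - (j+1) + 1 + (i+1) = m - j + 1 + i := fun i => by omega
          simp only [h3]
          have h4 : m - (j+1) + 1 + 0 = m - j := by omega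
          rw [h4, mul_comm]
        have e2 : ∏ i ∈ range (j+1), (1 - (X:Polynomial ℤ) ^ (m + 1 - (j+1) + 1 + i))
            = (∏ i ∈ range j, (1 - X^(m - j + 1 + i))) * (1 - X^(m+1)) := by
          rw [Finset.prod_range_succ]
          have h3 : ∀ i, m + 1 - (j+1) + 1 + i = m - j + 1 + i := fun i => by omega
          simp only [h3]
          have h5 : m - j + 1 + j = m + 1 := by omega
          rw [h5]
        have e3 : (X:Polynomial ℤ)^(j+1) * X^(m-j) = X^(m+1) := by
          rw [← pow_add]; congr 1; omega
        rw [qb]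
        linear_combination (qb m j) * hD + (1 - X^(j+1)) * hsj + X^(j+1) * hsj1
          + X^(j+1) * e1 - e2 - (∏ i ∈ range j, (1 - X^(m-j+1+i))) * e3

lemma qb_pascal2 (m j : ℕ) (h : j ≤ m) :
    qb (m+1) (j+1) = qb m (j+1) + X^(m-j) * qb m j := by
  rcases Nat.lt_or_ge m (j+1) with h2 | h2
  · have hjm : m = j := by omega
    subst hjm
    rw [qb_self, qb_of_lt (show m < m + 1 by omega), qb_self]
    simp [show m - m = 0 by omega]
  · refine mul_right_cancel₀ (D_ne_zero (j+1)) ?_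
    rw [qb_spec (m+1) (j+1) (by omega)]
    have hD : D (j+1) = D j * (1 - X^(j+1)) := Finset.prod_range_succ _ _
    have hsj := qb_spec m j (by omega)
    have hsj1 := qb_spec m (j+1) h2
    have e1 : ∏ i ∈ range (j+1), (1 - (X:Polynomial ℤ) ^ (m - (j+1) + 1 + i))
        = (1 - (X:Polynomial ℤ)^(m-j)) * ∏ i ∈ range j, (1 - X^(m - j + 1 + i)) := by
      rw [Finset.prod_range_succ']
      have h3 : ∀ i, m - (j+1) + 1 + (i+1) = m - j + 1 + i := fun i => by omega
      simp only [h3]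
      have h4 : m - (j+1) + 1 + 0 = m - j := by omega
      rw [h4, mul_comm]
    have e2 : ∏ i ∈ range (j+1), (1 - (X:Polynomial ℤ) ^ (m + 1 - (j+1) + 1 + i))
        = (∏ i ∈ range j, (1 - X^(m - j + 1 + i))) * (1 - X^(m+1)) := by
      rw [Finset.prod_range_succ]
      have h3 : ∀ i, m + 1 - (j+1) + 1 + i = m - j + 1 + i := fun i => by omega
      simp only [h3]
      have h5 : m - j + 1 + j = m + 1 := by omega
      rw [h5]
    have e3 : (X:Polynomial ℤ)^(j+1) * X^(m-j) = X^(m+1) := by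
      rw [← pow_add]; congr 1; omega
    linear_combination e2 - hsj1 - e1 - (X^(m-j) * qb m j) * hD
      - (X^(m-j) * (1 - X^(j+1))) * hsj
      + (∏ i ∈ range j, (1 - X^(m-j+1+i))) * e3

lemma qb_symm (a b : ℕ) : qb (a+b) a = qb (a+b) b := by
  refine mul_right_cancel₀ (mul_ne_zero (D_ne_zero a) (D_ne_zero b)) ?_
  have h1 := qb_spec (a+b) a (by omega)
  have h2 := qb_spec (a+b) b (by omega)
  have k1 : ∀ i, a + b - a + 1 + i = b + i + 1 := fun i => by omega
  have k2 : ∀ i, a + b - b + 1 + i = a + i + 1 := fun i => by omega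
  simp only [k1] at h1
  simp only [k2] at h2
  have f1 : D b * ∏ i ∈ range a, (1 - (X:Polynomial ℤ)^(b + i + 1)) = D (a+b) := by
    rw [D, D, add_comm a b, Finset.prod_range_add]
  have f2 : D a * ∏ i ∈ range b, (1 - (X:Polynomial ℤ)^(a + i + 1)) = D (a+b) := by
    rw [D, D, Finset.prod_range_add]
  calc qb (a+b) a * (D a * D b)
      = (∏ i ∈ range a, (1 - (X:Polynomial ℤ)^(b + i + 1))) * D b := by
        rw [← h1]; ring
    _ = D (a+b) := by rw [← f1]; ring
    _ = (∏ i ∈ range b, (1 - (X:Polynomial ℤ)^(a + i + 1))) * D a := by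
        rw [← f2]; ring
    _ = qb (a+b) b * (D a * D b) := by rw [← h2]; ring

/-! ### Power series machinery -/

abbrev PS := PowerSeries (Polynomial ℤ)

def co (n : ℕ) (φ : PS) : Polynomial ℤ := PowerSeries.coeff n φ

def G (e : ℕ) : PS := PowerSeries.mk fun i => X^(e*i)

@[simp] lemma co_G (e n : ℕ) : co n (G e) = X^(e*n) := PowerSeries.coeff_mk _ _

lemma geom (e : ℕ) : (1 - PowerSeries.C (R := Polynomial ℤ) (X^e) * PowerSeries.X) * G e = 1 := by
  ext n
  rw [sub_mul, one_mul, map_sub]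
  cases n with
  | zero =>
      simp [G, PowerSeries.coeff_zero_eq_constantCoeff, mul_assoc]
  | succ n =>
      rw [mul_assoc, PowerSeries.coeff_C_mul, mul_comm PowerSeries.X (G e),
        PowerSeries.coeff_succ_mul_X]
      simp [G, PowerSeries.coeff_mk, Nat.mul_succ, pow_add, PowerSeries.coeff_one, mul_comm]

lemma removal (e N : ℕ) (Q : PS) :
    co N Q = co N (G e * Q) - X^e * co N (PowerSeries.X * (G e * Q)) := by
  have h0 : Q = (1 - PowerSeries.C (R := Polynomial ℤ) (X^e) * PowerSeries.X) * (G e * Q) := by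
    rw [← mul_assoc, geom, one_mul]
  conv_lhs => rw [h0]
  rw [sub_mul, one_mul, mul_assoc]
  simp only [co, map_sub, PowerSeries.coeff_C_mul]

lemma co_succ_X_mul (N : ℕ) (Q : PS) : co (N+1) (PowerSeries.X * Q) = co N Q := by
  rw [co, mul_comm, PowerSeries.coeff_succ_mul_X]; rfl

lemma co_zero_X_mul (Q : PS) : co 0 (PowerSeries.X * Q) = 0 := by
  rw [co, PowerSeries.coeff_zero_eq_constantCoeff]
  simp

lemma co_G_mul_succ (e N : ℕ) (Q : PS) :
    co (N+1) (G e * Q) = co (N+1) Q + X^e * co N (G e * Q) := by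
  have h := removal e (N+1) Q
  rw [co_succ_X_mul] at h
  linear_combination -h

def R (e m : ℕ) : PS := ∏ i ∈ range m, G (e+i)

lemma R_succ (e m : ℕ) : R e (m+1) = R e m * G (e+m) := Finset.prod_range_succ _ _

lemma R_add (e m m' : ℕ) : R e m * R (e+m) m' = R e (m+m') := by
  simp [R, Finset.prod_range_add, add_assoc]

lemma R_merge (a b : ℕ) : R 0 a * R a b = R 0 (a+b) := by
  simpa using R_add 0 a b

lemma co_mul (N : ℕ) (φ ψ : PS) :
    co N (φ * ψ) = ∑ p ∈ Finset.HasAntidiagonal.antidiagonal N, co p.1 φ * co p.2 ψ :=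
  PowerSeries.coeff_mul _ _ _

lemma co_one (N : ℕ) : co N (1 : PS) = if N = 0 then 1 else 0 := by
  simp [co, PowerSeries.coeff_one]

lemma co_R0 : ∀ f N, co N (R 0 (f+1)) = qb (f+N) N
  | 0, N => by
      simp [R, qb_self]
  | f+1, 0 => by
      have h : R 0 (f+2) = R 0 (f+1) * G (f+1) := by
        rw [R_succ]; norm_num
      rw [h, co_mul]
      simp [co_R0 f 0, qb_zero, co_one]
  | f+1, N+1 => by
      have hs : R 0 (f+2) = G (f+1) * R 0 (f+1) := by
        rw [R_succ, mul_comm]; norm_num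
      rw [hs, co_G_mul_succ, ← hs, co_R0 (f+1) N, co_R0 f (N+1)]
      have hp := qb_pascal2 (f+N+1) N (by omega)
      have he : f+N+1 - N = f+1 := by omega
      rw [he] at hp
      simpa [show f+1+(N+1) = f+N+1+1 by omega, show f+(N+1) = f+N+1 by omega,
        show f+1+N = f+N+1 by omega] using hp.symm
  termination_by f N => (f, N)

lemma co_R_shift (m : ℕ) : ∀ (e N : ℕ), co N (R e m) = X^(e*N) * co N (R 0 m) := by
  induction m with
  | zero =>
      intro e N
      rw [R, R]
      simp only [Finset.prod_range_zero]
      cases N <;> simp [co_one]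
  | succ m ih =>
      intro e N
      rw [R_succ, R_succ, co_mul, co_mul, Finset.mul_sum]
      refine Finset.sum_congr rfl fun p hp => ?_
      obtain ⟨a, b⟩ := p
      obtain rfl : a + b = N := Finset.HasAntidiagonal.mem_antidiagonal.1 hp
      rw [ih e a, co_G, co_G, zero_add]
      rw [show (e+m)*b = e*b + m*b by ring, show e*(a+b) = e*a + e*b by ring,
        pow_add, pow_add]
      ring

def S4 (N : ℕ) : Finset ((_ : ℕ × ℕ) × (_ : ℕ × ℕ) × ℕ × ℕ) :=
  (Finset.HasAntidiagonal.antidiagonal N).sigma fun p =>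
    (Finset.HasAntidiagonal.antidiagonal p.2).sigma fun q => Finset.HasAntidiagonal.antidiagonal q.2

lemma co_mul4 (Q0 Q1 Q2 Q3 : PS) (N : ℕ) :
    co N (Q0 * Q1 * Q2 * Q3)
      = ∑ g ∈ Finset.Nat.antidiagonalTuple 4 N,
          co (g 0) Q0 * co (g 1) Q1 * co (g 2) Q2 * co (g 3) Q3 := by
  have h1 : co N (Q0 * Q1 * Q2 * Q3)
      = ∑ x ∈ S4 N, co x.1.1 Q0 * co x.2.1.1 Q1 * co x.2.2.1 Q2 * co x.2.2.2 Q3 := by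
    rw [show Q0*Q1*Q2*Q3 = Q0*(Q1*(Q2*Q3)) by ring, S4, Finset.sum_sigma, co_mul]
    refine Finset.sum_congr rfl fun p hp => ?_
    rw [Finset.sum_sigma, co_mul, Finset.mul_sum]
    refine Finset.sum_congr rfl fun q hq => ?_
    rw [co_mul, Finset.mul_sum, Finset.mul_sum]
    exact Finset.sum_congr rfl fun r hr => by ring
  rw [h1]
  refine Finset.sum_nbij' (fun x => ![x.1.1, x.2.1.1, x.2.2.1, x.2.2.2])
    (fun g => ⟨(g 0, g 1 + (g 2 + g 3)), (g 1, g 2 + g 3), (g 2, g 3)⟩)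
    ?_ ?_ ?_ ?_ ?_
  · intro x hx
    simp only [S4, Finset.mem_sigma, Finset.HasAntidiagonal.mem_antidiagonal] at hx
    rw [Finset.Nat.mem_antidiagonalTuple]
    simp [Fin.sum_univ_four]
    omega
  · intro g hg
    rw [Finset.Nat.mem_antidiagonalTuple] at hg
    simp only [S4, Finset.mem_sigma, Finset.HasAntidiagonal.mem_antidiagonal]
    refine ⟨?_, ?_, ?_⟩ <;> simp [← hg, Fin.sum_univ_four] <;> omega
  · intro x hx
    simp only [S4, Finset.mem_sigma, Finset.HasAntidiagonal.mem_antidiagonal] at hx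
    obtain ⟨⟨a, b⟩, ⟨c, d⟩, e, f⟩ := x
    simp only [Matrix.cons_val_zero, Matrix.cons_val_one, Matrix.head_cons] at *
    simp_all
  · intro g hg
    funext i
    fin_cases i <;> rfl
  · intro x hx
    rfl

end

end DegTwoAux


open DegTwoAux in
/-- Contribution of the two-component configuration `(ij)–(ij')–(jj')`, `i < j < j'`,
to the Poincaré polynomial of `M̄₀,₀(G(k,n),2)`:
`∑ q^{4+3i₀+2i₁+i₂+j₁+2j₂+4j₃+i₀j₁+i₀j₂+i₀j₃+i₁j₂+i₁j₃+i₂j₃}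
   [i₀+j₀ choose i₀]_q [i₁+j₁ choose i₁]_q [i₂+j₂ choose i₂]_q [i₃+j₃ choose i₃]_q
 = q⁴[k+1 choose 3]_q[n+1 choose k+2]_q − q⁷[k+2 choose 4]_q[n choose k+2]_q
   + q⁸[k+1 choose 4]_q[n choose k+2]_q`,
where the sum is over nonnegative `(i₀,i₁,i₂,i₃)` with `i₀+i₁+i₂+i₃ = k−2` and
`(j₀,j₁,j₂,j₃)` with `j₀+j₁+j₂+j₃ = n−k−1`, and `gb` is the Gaussian binomial
coefficient characterized by the product formula. -/
theorem degree_two_configuration_contribution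
    (gb : ℕ → ℕ → Polynomial ℤ)
    (hgb : ∀ m j : ℕ, j ≤ m →
      gb m j * ∏ i ∈ Finset.Icc 1 j, (1 - (X : Polynomial ℤ) ^ i)
        = ∏ i ∈ Finset.Icc 1 j, (1 - (X : Polynomial ℤ) ^ (m - j + i)))
    (hgb0 : ∀ m j : ℕ, m < j → gb m j = 0)
    (k n : ℕ) (hk : 2 ≤ k) (hkn : k + 1 ≤ n) :
    ∑ f ∈ Finset.Nat.antidiagonalTuple 4 (k - 2),
      ∑ g ∈ Finset.Nat.antidiagonalTuple 4 (n - k - 1),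
        (X : Polynomial ℤ) ^
            (4 + 3 * f 0 + 2 * f 1 + f 2 + g 1 + 2 * g 2 + 4 * g 3
              + f 0 * g 1 + f 0 * g 2 + f 0 * g 3 + f 1 * g 2 + f 1 * g 3 + f 2 * g 3)
          * gb (f 0 + g 0) (f 0) * gb (f 1 + g 1) (f 1)
          * gb (f 2 + g 2) (f 2) * gb (f 3 + g 3) (f 3)
      = X ^ 4 * gb (k + 1) 3 * gb (n + 1) (k + 2)
        - X ^ 7 * gb (k + 2) 4 * gb n (k + 2)
        + X ^ 8 * gb (k + 1) 4 * gb n (k + 2) := by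
  have hq : ∀ m j : ℕ, gb m j = qb m j := by
    intro m j
    rcases Nat.lt_or_ge m j with h | h
    · rw [hgb0 m j h, qb_of_lt h]
    · refine mul_right_cancel₀ (D_ne_zero j) ?_
      rw [qb_spec m j h]
      have hh := hgb m j h
      rw [prod_Icc_one, prod_Icc_one] at hh
      have hp : ∏ i ∈ range j, (1 - (X:Polynomial ℤ)^(m-j+1+i))
          = ∏ i ∈ range j, (1 - X^(m-j+(i+1))) :=
        Finset.prod_congr rfl fun i _ => by rw [show m-j+1+i = m-j+(i+1) by omega]
      rw [hp, D]
      exact hh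
  simp only [hq]
  obtain ⟨K, rfl⟩ : ∃ K, k = K + 2 := ⟨k - 2, by omega⟩
  obtain ⟨N, rfl⟩ : ∃ N, n = K + N + 3 := ⟨n - (K + 2) - 1, by omega⟩
  clear hk hkn
  have e1 : K + 2 - 2 = K := by omega
  have e2 : K + N + 3 - (K + 2) - 1 = N := by omega
  rw [e1, e2]
  have hterm : ∀ f ∈ Finset.Nat.antidiagonalTuple 4 K,
      (∑ g ∈ Finset.Nat.antidiagonalTuple 4 N,
        (X : Polynomial ℤ) ^
            (4 + 3 * f 0 + 2 * f 1 + f 2 + g 1 + 2 * g 2 + 4 * g 3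
              + f 0 * g 1 + f 0 * g 2 + f 0 * g 3 + f 1 * g 2 + f 1 * g 3 + f 2 * g 3)
          * qb (f 0 + g 0) (f 0) * qb (f 1 + g 1) (f 1)
          * qb (f 2 + g 2) (f 2) * qb (f 3 + g 3) (f 3))
      = X ^ (4 + 3 * f 0 + 2 * f 1 + f 2) * co N (R 0 (K+5))
        - X ^ (7 + 4 * f 0 + 3 * f 1 + 2 * f 2)
            * co N (PowerSeries.X * R 0 (K+5)) := by
    intro f hf
    have hfs : f 0 + f 1 + f 2 + f 3 = K := by
      have hm := Finset.Nat.mem_antidiagonalTuple.1 hf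
      simpa [Fin.sum_univ_four] using hm
    have hA : (∑ g ∈ Finset.Nat.antidiagonalTuple 4 N,
        (X : Polynomial ℤ) ^
            (4 + 3 * f 0 + 2 * f 1 + f 2 + g 1 + 2 * g 2 + 4 * g 3
              + f 0 * g 1 + f 0 * g 2 + f 0 * g 3 + f 1 * g 2 + f 1 * g 3 + f 2 * g 3)
          * qb (f 0 + g 0) (f 0) * qb (f 1 + g 1) (f 1)
          * qb (f 2 + g 2) (f 2) * qb (f 3 + g 3) (f 3))
        = X ^ (4 + 3 * f 0 + 2 * f 1 + f 2) *
            co N (R 0 (f 0 + 1) * R (f 0 + 1) (f 1 + 1) * R (f 0 + f 1 + 2) (f 2 + 1)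
              * R (f 0 + f 1 + f 2 + 4) (f 3 + 1)) := by
      rw [co_mul4, Finset.mul_sum]
      refine Finset.sum_congr rfl fun g hg => ?_
      rw [co_R_shift (f 1 + 1) (f 0 + 1) (g 1),
        co_R_shift (f 2 + 1) (f 0 + f 1 + 2) (g 2),
        co_R_shift (f 3 + 1) (f 0 + f 1 + f 2 + 4) (g 3),
        co_R0 (f 0) (g 0), co_R0 (f 1) (g 1), co_R0 (f 2) (g 2), co_R0 (f 3) (g 3),
        qb_symm (f 0) (g 0), qb_symm (f 1) (g 1), qb_symm (f 2) (g 2),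
        qb_symm (f 3) (g 3)]
      ring
    have hQ : R 0 (f 0 + 1) * R (f 0 + 1) (f 1 + 1) * R (f 0 + f 1 + 2) (f 2 + 1)
          * R (f 0 + f 1 + f 2 + 4) (f 3 + 1)
        = R 0 (f 0 + f 1 + f 2 + 3) * R (f 0 + f 1 + f 2 + 4) (f 3 + 1) := by
      rw [R_merge (f 0 + 1) (f 1 + 1), show f 0+1+(f 1+1) = f 0+f 1+2 by omega,
        R_merge (f 0 + f 1 + 2) (f 2 + 1),
        show f 0+f 1+2+(f 2+1) = f 0+f 1+f 2+3 by omega]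
    have hfull : G (f 0 + f 1 + f 2 + 3)
          * (R 0 (f 0 + f 1 + f 2 + 3) * R (f 0 + f 1 + f 2 + 4) (f 3 + 1))
        = R 0 (K+5) := by
      rw [← mul_assoc, mul_comm (G _) (R 0 _)]
      have hstep : R 0 (f 0 + f 1 + f 2 + 3) * G (f 0 + f 1 + f 2 + 3)
          = R 0 (f 0 + f 1 + f 2 + 4) := by
        simpa using (R_succ 0 (f 0 + f 1 + f 2 + 3)).symm
      rw [hstep, R_merge, show f 0+f 1+f 2+4+(f 3+1) = K+5 by omega]
    have hrem := removal (f 0 + f 1 + f 2 + 3) N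
      (R 0 (f 0 + f 1 + f 2 + 3) * R (f 0 + f 1 + f 2 + 4) (f 3 + 1))
    rw [hfull] at hrem
    rw [hA, hQ, hrem]
    ring
  rw [Finset.sum_congr rfl hterm, Finset.sum_sub_distrib,
    ← Finset.sum_mul, ← Finset.sum_mul]
  have hS1 : ∑ f ∈ Finset.Nat.antidiagonalTuple 4 K,
      (X : Polynomial ℤ) ^ (4 + 3 * f 0 + 2 * f 1 + f 2) = X^4 * qb (K+3) 3 := by
    have hc : ∀ f ∈ Finset.Nat.antidiagonalTuple 4 K,
        (X : Polynomial ℤ) ^ (4 + 3 * f 0 + 2 * f 1 + f 2)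
          = X^4 * (co (f 0) (G 3) * co (f 1) (G 2) * co (f 2) (G 1) * co (f 3) (G 0)) := by
      intro f hf
      simp only [co_G]
      ring
    rw [Finset.sum_congr rfl hc, ← Finset.mul_sum, ← co_mul4]
    have hR4 : G 3 * G 2 * G 1 * G 0 = R 0 4 := by
      simp [R, Finset.prod_range_succ]
      ring
    rw [hR4]
    have h34 : co K (R 0 4) = qb (K+3) 3 := by
      have h := (co_R0 3 K).trans (qb_symm 3 K).symm
      simpa [show 3+K = K+3 by omega] using h
    rw [h34]
  have hS2 : ∑ f ∈ Finset.Nat.antidiagonalTuple 4 K,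
      (X : Polynomial ℤ) ^ (7 + 4 * f 0 + 3 * f 1 + 2 * f 2)
        = X^7 * (qb (K+4) 4 - X * qb (K+3) 4) := by
    have hc : ∀ f ∈ Finset.Nat.antidiagonalTuple 4 K,
        (X : Polynomial ℤ) ^ (7 + 4 * f 0 + 3 * f 1 + 2 * f 2)
          = X^7 * (co (f 0) (G 4) * co (f 1) (G 3) * co (f 2) (G 2) * co (f 3) (G 0)) := by
      intro f hf
      simp only [co_G]
      ring
    rw [Finset.sum_congr rfl hc, ← Finset.mul_sum, ← co_mul4]
    have hfull5 : G 1 * (G 4 * G 3 * G 2 * G 0) = R 0 5 := by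
      simp [R, Finset.prod_range_succ]
      ring
    have h := removal 1 K (G 4 * G 3 * G 2 * G 0)
    rw [hfull5] at h
    have h45 : co K (R 0 5) = qb (K+4) 4 := by
      have h' := (co_R0 4 K).trans (qb_symm 4 K).symm
      simpa [show 4+K = K+4 by omega] using h'
    have hB5 : co K (PowerSeries.X * R 0 5) = qb (K+3) 4 := by
      cases K with
      | zero =>
          rw [co_zero_X_mul, qb_of_lt (by omega)]
      | succ K' =>
          rw [co_succ_X_mul]
          have h' := (co_R0 4 K').trans (qb_symm 4 K').symm
          simpa [show 4+K' = K'+1+3 by omega] using h'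
    rw [h, h45, hB5]
    ring
  have hA2 : co N (R 0 (K+5)) = qb (K+N+4) (K+4) := by
    have h := (co_R0 (K+4) N).trans (qb_symm (K+4) N).symm
    simpa [show K+4+N = K+N+4 by omega] using h
  have hB2 : co N (PowerSeries.X * R 0 (K+5)) = qb (K+N+3) (K+4) := by
    cases N with
    | zero =>
        rw [co_zero_X_mul, qb_of_lt (by omega)]
    | succ N' =>
        rw [co_succ_X_mul]
        have h := (co_R0 (K+4) N').trans (qb_symm (K+4) N').symm
        simpa [show K+4+N' = K+(N'+1)+3 by omega] using h
  rw [hS1, hS2, hA2, hB2]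
  simp only [show K+2+1 = K+3 from rfl, show K+2+2 = K+4 from rfl,
    show K+N+3+1 = K+N+4 from rfl]
  ring
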